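/- Define mmse : [0,∞) → ℝ by mmse(s) = 1 − ∫_ℝ tanh(s + √s·z) · (2π)^{−1/2} e^{−z²/2} dz. Then mmse is nonincreasing: for all 0 ≤ s ≤ t, mmse(t) ≤ mmse(s). -/

import Mathlib

open Real MeasureTheory

/-- The minimum mean-squared error of the BPSK-input real AWGN channel with
signal-to-noise ratio `s`:
`mmse(s) = 1 − ∫ tanh(s + √s·z) · (2π)^{−1/2} e^{−z²/2} dz`. -/
noncomputable def mmse (s : ℝ) : ℝ :=
  1 - ∫ z : ℝ,
    Real.tanh (s + Real.sqrt s * z) * ((Real.sqrt (2 * Real.pi))⁻¹ * Real.exp (-z ^ 2 / 2))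

noncomputable def gφ (z : ℝ) : ℝ := (Real.sqrt (2 * Real.pi))⁻¹ * Real.exp (-z ^ 2 / 2)

lemma gφ_pos (z : ℝ) : 0 < gφ z := by
  have h2π : (0:ℝ) < 2 * π := by positivity
  exact mul_pos (inv_pos.2 (Real.sqrt_pos.2 h2π)) (Real.exp_pos _)

lemma gφ_nonneg (z : ℝ) : 0 ≤ gφ z := (gφ_pos z).le

lemma continuous_gφ : Continuous gφ := by
  unfold gφ; fun_prop

lemma gφ_le (z : ℝ) : gφ z ≤ (Real.sqrt (2 * Real.pi))⁻¹ := by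
  have : Real.exp (-z ^ 2 / 2) ≤ 1 := by
    rw [Real.exp_le_one_iff]; nlinarith [sq_nonneg z]
  have h : (0:ℝ) ≤ (Real.sqrt (2 * Real.pi))⁻¹ := by positivity
  calc gφ z ≤ (Real.sqrt (2 * Real.pi))⁻¹ * 1 := mul_le_mul_of_nonneg_left this h
  _ = _ := mul_one _

lemma gφ_eq (z : ℝ) : gφ z = (Real.sqrt (2 * Real.pi))⁻¹ * Real.exp (-(2⁻¹) * z ^ 2) := by
  unfold gφ; ring_nf

lemma gφ_funext : gφ = fun z => (Real.sqrt (2 * Real.pi))⁻¹ * Real.exp (-(2⁻¹) * z ^ 2) :=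
  funext gφ_eq

lemma integrable_gφ : Integrable gφ := by
  rw [gφ_funext]
  exact (integrable_exp_neg_mul_sq (by norm_num : (0:ℝ) < 2⁻¹)).const_mul _

lemma integral_gφ : ∫ z : ℝ, gφ z = 1 := by
  rw [gφ_funext]
  rw [integral_const_mul, integral_gaussian]
  have : π / 2⁻¹ = 2 * π := by ring
  rw [this, inv_mul_cancel₀ (by positivity : Real.sqrt (2*π) ≠ 0)]

lemma integral_gφ_shift (c : ℝ) : ∫ z : ℝ, gφ (z + c) = 1 := by
  rw [integral_add_right_eq_self gφ c, integral_gφ]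

lemma continuous_tanh : Continuous Real.tanh := by
  have : Real.tanh = fun x => Real.sinh x / Real.cosh x := funext fun x => Real.tanh_eq_sinh_div_cosh (x := x)
  rw [this]
  exact Real.continuous_sinh.div Real.continuous_cosh fun x => (Real.cosh_pos x).ne'

lemma tanh_exp (x : ℝ) : Real.tanh x = (Real.exp (2*x) - 1) / (Real.exp (2*x) + 1) := by
  rw [Real.tanh_eq_sinh_div_cosh, Real.sinh_eq, Real.cosh_eq]
  have h1 : Real.exp (2*x) = Real.exp x * Real.exp x := by rw [← Real.exp_add]; ring_nf
  have h2 : Real.exp (-x) = (Real.exp x)⁻¹ := Real.exp_neg x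
  have h3 : Real.exp x ≠ 0 := (Real.exp_pos x).ne'
  have h4 : Real.exp x + (Real.exp x)⁻¹ ≠ 0 := by positivity
  have h5 : Real.exp x * Real.exp x + 1 ≠ 0 := by positivity
  rw [h1, h2]
  field_simp

lemma abs_tanh_le (x : ℝ) : |Real.tanh x| ≤ 1 := by
  rw [tanh_exp, abs_div, abs_of_pos (by positivity : (0:ℝ) < Real.exp (2*x) + 1),
    div_le_one (by positivity)]
  have := Real.exp_pos (2*x)
  rw [abs_le]; constructor <;> nlinarith

lemma key_ineq (x y : ℝ) :
    (1 + Real.exp (-(2*y))) * Real.tanh x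
      ≤ Real.tanh (x + y) + Real.exp (-(2*y)) * Real.tanh (x - y) := by
  have hp : (0:ℝ) < Real.exp (2*x) := Real.exp_pos _
  have hq : (0:ℝ) < Real.exp (2*y) := Real.exp_pos _
  set p := Real.exp (2*x) with hpdef
  set q := Real.exp (2*y) with hqdef
  have e1 : Real.exp (2*(x+y)) = p * q := by rw [hpdef, hqdef, ← Real.exp_add]; ring_nf
  have e2 : Real.exp (2*(x-y)) = p / q := by rw [hpdef, hqdef, ← Real.exp_sub]; ring_nf
  have e3 : Real.exp (-(2*y)) = q⁻¹ := by rw [hqdef, ← Real.exp_neg]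
  rw [tanh_exp x, tanh_exp (x+y), tanh_exp (x-y), e1, e2, e3, ← hpdef]
  have h1 : (0:ℝ) < p + 1 := by linarith
  have h2 : (0:ℝ) < p * q + 1 := by nlinarith
  have h3 : (0:ℝ) < p / q + 1 := by positivity
  have h4 : p / q - 1 = (p - q) / q := by field_simp
  have h5 : p / q + 1 = (p + q) / q := by field_simp
  rw [← sub_nonneg]
  have expand : (p*q - 1)/(p*q + 1) + q⁻¹ * ((p/q - 1)/(p/q + 1))
      - (1 + q⁻¹) * ((p - 1)/(p + 1))
      = (2 * p * (q - 1)^2 * (q + 1)) / (q * (p*q + 1) * (p + q) * (p + 1)) := by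
    rw [h4, h5]
    have hq0 : q ≠ 0 := hq.ne'
    have hpq : p + q ≠ 0 := by positivity
    field_simp
    ring
  rw [expand]
  positivity

lemma gφ_shift_eq (b w : ℝ) : gφ (w + 2*b) = Real.exp (-(2*(b^2 + b*w))) * gφ w := by
  unfold gφ
  rw [show Real.exp (-(2*(b^2 + b*w))) * ((Real.sqrt (2*Real.pi))⁻¹ * Real.exp (-w^2/2))
      = (Real.sqrt (2*Real.pi))⁻¹ * (Real.exp (-(2*(b^2 + b*w))) * Real.exp (-w^2/2)) from by ring,
    ← Real.exp_add]
  congr 2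
  ring

lemma integrable_gφ_shift (c : ℝ) : Integrable (fun w : ℝ => gφ (w + c)) :=
  integrable_gφ.comp_add_right c

/-- bounded-by-gφ-shift integrability helper -/
lemma integrable_of_le_gφ_shift {f : ℝ → ℝ} (c : ℝ) (hf : Continuous f)
    (h : ∀ w, |f w| ≤ gφ (w + c)) : Integrable f := by
  refine (integrable_gφ_shift c).mono' hf.aestronglyMeasurable ?_
  filter_upwards with w
  simpa using h w

lemma step_c {u : ℝ} (hu : 0 < u) (x : ℝ) :
    Real.tanh x ≤ ∫ w : ℝ, Real.tanh (x + u + Real.sqrt u * w) * gφ w := by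
  set b := Real.sqrt u with hbdef
  have hb : 0 < b := Real.sqrt_pos.2 hu
  have hb2 : b^2 = u := Real.sq_sqrt hu.le
  set L : ℝ → ℝ := fun w => Real.tanh (x + u + b * w) * gφ w with hLdef
  have hLcont : Continuous L := ((continuous_tanh.comp (by continuity)).mul continuous_gφ)
  have hLbound : ∀ w, |L w| ≤ gφ (w + 0) := by
    intro w
    rw [add_zero, hLdef, abs_mul, abs_of_nonneg (gφ_nonneg w)]
    calc |Real.tanh (x + u + b * w)| * gφ w ≤ 1 * gφ w :=
      mul_le_mul_of_nonneg_right (abs_tanh_le _) (gφ_nonneg w)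
    _ = gφ w := one_mul _
  have hLint : Integrable L := integrable_of_le_gφ_shift 0 hLcont hLbound
  -- the reflected function
  set M : ℝ → ℝ := fun w =>
    Real.exp (-(2*(u + b*w))) * Real.tanh (x - (u + b * w)) * gφ w with hMdef
  have hMeq : ∀ w, L (-(2*b) - w) = M w := by
    intro w
    rw [hLdef, hMdef]
    simp only
    have h1 : x + u + b * (-(2*b) - w) = x - (u + b * w) := by
      rw [← hb2]; ring
    have h2 : gφ (-(2*b) - w) = Real.exp (-(2*(u + b*w))) * gφ w := by
      have hsq : gφ (-(2*b) - w) = gφ (w + 2*b) := by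
        unfold gφ; rw [show (-(2*b) - w)^2 = (w + 2*b)^2 from by ring]
      rw [hsq, gφ_shift_eq, hb2]
    rw [h1, h2]
    ring
  have hrefl : ∫ w, L w = ∫ w, M w := by
    have e1 : ∫ w, L w = ∫ w, L (-w) := (integral_neg_eq_self L volume).symm
    have e2 : ∫ w : ℝ, L (-w) = ∫ w : ℝ, L (-(w + 2*b)) :=
      (integral_add_right_eq_self (fun w => L (-w)) (2*b)).symm
    have e3 : ∀ w : ℝ, L (-(w + 2*b)) = M w := by
      intro w
      have : -(w + 2*b) = -(2*b) - w := by ring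
      rw [this, hMeq]
    rw [e1, e2]
    exact integral_congr_ae (Filter.Eventually.of_forall e3)
  -- integrability of M
  have hMcont : Continuous M := by
    apply Continuous.mul
    apply Continuous.mul
    · exact Real.continuous_exp.comp (by continuity)
    · exact continuous_tanh.comp (by continuity)
    · exact continuous_gφ
  have hMbound : ∀ w, |M w| ≤ gφ (w + 2*b) := by
    intro w
    rw [gφ_shift_eq, hb2]
    rw [hMdef]
    simp only
    rw [abs_mul, abs_mul, abs_of_pos (Real.exp_pos _), abs_of_nonneg (gφ_nonneg w)]
    have htl := abs_tanh_le (x - (u + b*w))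
    calc Real.exp (-(2*(u + b*w))) * |Real.tanh (x - (u + b*w))| * gφ w
        ≤ Real.exp (-(2*(u + b*w))) * 1 * gφ w := by
          apply mul_le_mul_of_nonneg_right _ (gφ_nonneg w)
          exact mul_le_mul_of_nonneg_left htl (Real.exp_pos _).le
      _ = Real.exp (-(2*(u + b*w))) * gφ w := by ring
  have hMint : Integrable M := integrable_of_le_gφ_shift (2*b) hMcont hMbound
  -- the lower bound function
  set R : ℝ → ℝ := fun w =>
    (1 + Real.exp (-(2*(u + b*w)))) * Real.tanh x * gφ w with hRdef
  have hRint : Integrable R := by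
    have : R = fun w => Real.tanh x * gφ w
        + Real.tanh x * (Real.exp (-(2*(u + b*w))) * gφ w) := by
      funext w; rw [hRdef]; ring
    rw [this]
    apply Integrable.add
    · exact (integrable_gφ.const_mul _)
    · apply Integrable.const_mul
      have : (fun w : ℝ => Real.exp (-(2*(u + b*w))) * gφ w) = fun w => gφ (w + 2*b) := by
        funext w
        rw [gφ_shift_eq, hb2]
      rw [this]
      exact integrable_gφ_shift _
  have hRval : ∫ w, R w = 2 * Real.tanh x := by
    have : R = fun w => Real.tanh x * gφ w
        + Real.tanh x * gφ (w + 2*b) := by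
      funext w
      rw [hRdef, gφ_shift_eq, hb2]
      ring
    rw [this, integral_add (integrable_gφ.const_mul _)
      ((integrable_gφ_shift (2*b)).const_mul _),
      integral_const_mul, integral_const_mul, integral_gφ, integral_gφ_shift]
    ring
  -- pointwise: L w + M w ≥ R w
  have hpt : ∀ w, R w ≤ L w + M w := by
    intro w
    rw [hRdef, hLdef, hMdef]
    simp only
    have hk := key_ineq x (u + b*w)
    have hgφ := gφ_nonneg w
    have : (1 + Real.exp (-(2*(u + b*w)))) * Real.tanh x * gφ w
        ≤ (Real.tanh (x + (u + b*w)) + Real.exp (-(2*(u + b*w))) * Real.tanh (x - (u + b*w))) * gφ w :=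
      mul_le_mul_of_nonneg_right hk hgφ
    calc (1 + Real.exp (-(2*(u + b*w)))) * Real.tanh x * gφ w
        ≤ (Real.tanh (x + (u + b*w)) + Real.exp (-(2*(u + b*w))) * Real.tanh (x - (u + b*w))) * gφ w := this
      _ = Real.tanh (x + u + b*w) * gφ w + Real.exp (-(2*(u + b*w))) * Real.tanh (x - (u + b*w)) * gφ w := by
          rw [show x + (u + b*w) = x + u + b*w by ring]; ring
  -- conclude
  have h2 : 2 * Real.tanh x ≤ 2 * ∫ w, L w := by
    calc 2 * Real.tanh x = ∫ w, R w := hRval.symm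
      _ ≤ ∫ w, (L w + M w) := integral_mono hRint (hLint.add hMint) hpt
      _ = (∫ w, L w) + ∫ w, M w := integral_add hLint hMint
      _ = 2 * ∫ w, L w := by rw [← hrefl]; ring
  linarith

lemma kernel {a b : ℝ} (ha : 0 < a) (hb : 0 < b) (ζ : ℝ) :
    (∫ z : ℝ, (Real.sqrt (a^2+b^2) / b) * gφ ((Real.sqrt (a^2+b^2) * ζ - a * z)/b) * gφ z)
      = gφ ζ := by
  set c := Real.sqrt (a^2+b^2) with hcdef
  have hc : 0 < c := Real.sqrt_pos.2 (by positivity)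
  have hc2 : c^2 = a^2 + b^2 := Real.sq_sqrt (by positivity)
  set k := c^2/(2*b^2) with hkdef
  have hk : 0 < k := by positivity
  set m := (a/c) * ζ with hmdef
  have hb' : (b:ℝ) ≠ 0 := hb.ne'
  have hc' : (c:ℝ) ≠ 0 := hc.ne'
  have hfun : ∀ z : ℝ, (c / b) * gφ ((c * ζ - a * z)/b) * gφ z
      = ((c/b) * (Real.sqrt (2*Real.pi))⁻¹ * gφ ζ) * Real.exp (-k * (z - m)^2) := by
    intro z
    unfold gφ
    have hexp : Real.exp (-((c*ζ - a*z)/b)^2/2) * Real.exp (-z^2/2)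
        = Real.exp (-ζ^2/2) * Real.exp (-k*(z-m)^2) := by
      rw [← Real.exp_add, ← Real.exp_add]
      congr 1
      rw [hkdef, hmdef]
      field_simp
      linear_combination (z^2 - ζ^2) * hc2
    calc (c / b) * ((Real.sqrt (2*Real.pi))⁻¹ * Real.exp (-((c*ζ - a*z)/b)^2/2))
          * ((Real.sqrt (2*Real.pi))⁻¹ * Real.exp (-z^2/2))
        = (c/b) * (Real.sqrt (2*Real.pi))⁻¹ * (Real.sqrt (2*Real.pi))⁻¹
          * (Real.exp (-((c*ζ - a*z)/b)^2/2) * Real.exp (-z^2/2)) := by ring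
      _ = (c/b) * (Real.sqrt (2*Real.pi))⁻¹ * (Real.sqrt (2*Real.pi))⁻¹
          * (Real.exp (-ζ^2/2) * Real.exp (-k*(z-m)^2)) := by rw [hexp]
      _ = ((c/b) * (Real.sqrt (2*Real.pi))⁻¹ * ((Real.sqrt (2*Real.pi))⁻¹ * Real.exp (-ζ^2/2)))
          * Real.exp (-k*(z-m)^2) := by ring
  rw [integral_congr_ae (Filter.Eventually.of_forall hfun)]
  rw [integral_const_mul]
  rw [show (fun z : ℝ => Real.exp (-k * (z - m)^2)) = fun z : ℝ => (fun y : ℝ => Real.exp (-k * y^2)) (z - m) from rfl]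
  rw [integral_sub_right_eq_self (fun y : ℝ => Real.exp (-k * y^2)) m]
  rw [integral_gaussian]
  have hπk : π / k = (2*π) * (b/c)^2 := by
    rw [hkdef]; field_simp
  rw [hπk, Real.sqrt_mul (by positivity) ((b/c)^2), Real.sqrt_sq (by positivity)]
  unfold gφ
  have h2π : Real.sqrt (2*π) ≠ 0 := by positivity
  field_simp

lemma integrable_bdd_gφ {f : ℝ → ℝ} {C : ℝ} (hf : Continuous f)
    (h : ∀ z, |f z| ≤ C * gφ z) : Integrable f := by
  refine (integrable_gφ.const_mul C).mono' hf.aestronglyMeasurable ?_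
  filter_upwards with z
  simpa [Real.norm_eq_abs] using h z

lemma conv_repr {s u : ℝ} (hs : 0 < s) (hu : 0 < u) :
    ∫ z : ℝ, Real.tanh ((s+u) + Real.sqrt (s+u) * z) * gφ z
      = ∫ z : ℝ, (∫ w : ℝ, Real.tanh ((s+u) + Real.sqrt s * z + Real.sqrt u * w) * gφ w) * gφ z := by
  set a := Real.sqrt s with hadef
  set b := Real.sqrt u with hbdef
  have ha : 0 < a := Real.sqrt_pos.2 hs
  have hb : 0 < b := Real.sqrt_pos.2 hu
  have ha2 : a^2 = s := Real.sq_sqrt hs.le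
  have hb2 : b^2 = u := Real.sq_sqrt hu.le
  have hab : a^2 + b^2 = s + u := by rw [ha2, hb2]
  set c := Real.sqrt (a^2+b^2) with hcdef
  have hceq : c = Real.sqrt (s+u) := by rw [hcdef, hab]
  have hc : 0 < c := Real.sqrt_pos.2 (by positivity)
  have hb' : b ≠ 0 := hb.ne'
  have hc' : c ≠ 0 := hc.ne'
  have hcb : (0:ℝ) < c/b := div_pos hc hb
  set t := s + u with htdef
  set Ψ : ℝ → ℝ → ℝ := fun ζ z => (c/b) * gφ ((c*ζ - a*z)/b) * gφ z with hΨdef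
  set H : ℝ → ℝ → ℝ := fun ζ z => Real.tanh (t + c*ζ) * Ψ ζ z with hHdef
  have hΨcont : ∀ ζ : ℝ, Continuous (Ψ ζ) := fun ζ =>
    (continuous_const.mul (continuous_gφ.comp (by fun_prop))).mul continuous_gφ
  have hΨnn : ∀ ζ z : ℝ, 0 ≤ Ψ ζ z := fun ζ z =>
    mul_nonneg (mul_nonneg hcb.le (gφ_nonneg _)) (gφ_nonneg _)
  have hΨle : ∀ ζ z : ℝ, Ψ ζ z ≤ ((c/b) * (Real.sqrt (2*Real.pi))⁻¹) * gφ z := fun ζ z =>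
    mul_le_mul_of_nonneg_right (mul_le_mul_of_nonneg_left (gφ_le _) hcb.le) (gφ_nonneg z)
  have hΨint : ∀ ζ : ℝ, Integrable (Ψ ζ) := fun ζ =>
    integrable_bdd_gφ (hΨcont ζ) (fun z => by
      rw [abs_of_nonneg (hΨnn ζ z)]; exact hΨle ζ z)
  have habsH : ∀ ζ z : ℝ, |H ζ z| ≤ Ψ ζ z := by
    intro ζ z
    rw [hHdef]
    simp only
    rw [abs_mul, abs_of_nonneg (hΨnn ζ z)]
    calc |Real.tanh (t + c*ζ)| * Ψ ζ z ≤ 1 * Ψ ζ z :=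
        mul_le_mul_of_nonneg_right (abs_tanh_le _) (hΨnn ζ z)
      _ = Ψ ζ z := one_mul _
  have hslice : ∀ ζ z : ℝ, |H ζ z| ≤ ((c/b) * (Real.sqrt (2*Real.pi))⁻¹) * gφ z :=
    fun ζ z => (habsH ζ z).trans (hΨle ζ z)
  have hHslicecont : ∀ ζ : ℝ, Continuous (H ζ) := fun ζ => continuous_const.mul (hΨcont ζ)
  have hHsliceint : ∀ ζ : ℝ, Integrable (H ζ) := fun ζ =>
    integrable_bdd_gφ (hHslicecont ζ) (hslice ζ)
  have hHcont : Continuous (Function.uncurry H) := by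
    apply Continuous.mul
    · exact continuous_tanh.comp (by fun_prop)
    · apply Continuous.mul
      · exact continuous_const.mul (continuous_gφ.comp (by fun_prop))
      · exact continuous_gφ.comp continuous_snd
  have hHint : Integrable (Function.uncurry H) (volume.prod volume) := by
    rw [integrable_prod_iff hHcont.aestronglyMeasurable]
    constructor
    · filter_upwards with ζ
      exact hHsliceint ζ
    · have hmeas : StronglyMeasurable fun ζ : ℝ => ∫ z, ‖H ζ z‖ :=
        (hHcont.norm.stronglyMeasurable).integral_prod_right'
      refine integrable_gφ.mono' hmeas.aestronglyMeasurable ?_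
      filter_upwards with ζ
      have hle : ∫ z, ‖H ζ z‖ ≤ ∫ z, Ψ ζ z := by
        apply integral_mono (hHsliceint ζ).norm (hΨint ζ)
        intro z
        simpa [Real.norm_eq_abs] using habsH ζ z
      rw [norm_of_nonneg (integral_nonneg fun z => norm_nonneg _)]
      calc ∫ z, ‖H ζ z‖ ≤ ∫ z, Ψ ζ z := hle
        _ = gφ ζ := kernel ha hb ζ
  -- Step 1
  have step1 : ∫ ζ : ℝ, Real.tanh (t + c * ζ) * gφ ζ = ∫ ζ : ℝ, ∫ z : ℝ, H ζ z := by
    apply integral_congr_ae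
    filter_upwards with ζ
    rw [hHdef]
    simp only
    rw [integral_const_mul, kernel ha hb ζ]
  -- Step 2: Fubini
  have step2 : ∫ ζ : ℝ, ∫ z : ℝ, H ζ z = ∫ z : ℝ, ∫ ζ : ℝ, H ζ z :=
    integral_integral_swap hHint
  -- Step 3: inner substitution
  have step3 : ∀ z : ℝ, ∫ ζ : ℝ, H ζ z
      = (∫ w : ℝ, Real.tanh (t + a * z + b * w) * gφ w) * gφ z := by
    intro z
    have hsub : ∫ ζ : ℝ, H ζ z
        = |(b/c)| • ∫ w : ℝ, H ((b/c) * w + (a*z)/c) z := by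
      have h1 : ∀ w : ℝ, (b/c)*w + (a*z)/c = (b/c)*(w + (a*z)/c * (c/b)) := by
        intro w; field_simp
      have h2 : ∫ w : ℝ, H ((b/c) * w + (a*z)/c) z
          = ∫ w : ℝ, (fun y : ℝ => H ((b/c) * y) z) (w + (a*z)/c * (c/b)) := by
        apply integral_congr_ae; filter_upwards with w; rw [h1 w]
      rw [h2, integral_add_right_eq_self (fun y : ℝ => H ((b/c) * y) z) ((a*z)/c * (c/b))]
      rw [Measure.integral_comp_mul_left (fun ζ => H ζ z) (b/c)]
      rw [smul_smul]
      rw [show |b/c| * |(b/c)⁻¹| = 1 by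
        rw [abs_inv, mul_inv_cancel₀ (abs_ne_zero.2 (by positivity))], one_smul]
    rw [hsub]
    have h3 : ∀ w : ℝ, H ((b/c) * w + (a*z)/c) z
        = (c/b) * (Real.tanh (t + a*z + b*w) * gφ w * gφ z) := by
      intro w
      rw [hHdef, hΨdef]
      simp only
      have e1 : t + c * ((b/c)*w + (a*z)/c) = t + a*z + b*w := by field_simp; ring
      have e2 : (c * ((b/c)*w + (a*z)/c) - a*z)/b = w := by field_simp; ring
      rw [e1, e2]
      ring
    rw [integral_congr_ae (Filter.Eventually.of_forall h3), integral_const_mul]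
    rw [abs_of_pos (div_pos hb hc), smul_eq_mul]
    rw [← mul_assoc, show b/c * (c/b) = 1 by field_simp, one_mul]
    rw [show (fun w : ℝ => Real.tanh (t + a*z + b*w) * gφ w * gφ z)
        = fun w : ℝ => (Real.tanh (t + a*z + b*w) * gφ w) * gφ z from rfl]
    rw [integral_mul_const]
  -- assemble
  rw [← hceq]
  calc ∫ z : ℝ, Real.tanh (t + c * z) * gφ z
      = ∫ ζ : ℝ, ∫ z : ℝ, H ζ z := step1
    _ = ∫ z : ℝ, ∫ ζ : ℝ, H ζ z := step2
    _ = ∫ z : ℝ, (∫ w : ℝ, Real.tanh (t + a * z + b * w) * gφ w) * gφ z := by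
        apply integral_congr_ae; filter_upwards with z; rw [step3 z]


lemma mmse_eq (s : ℝ) : mmse s = 1 - ∫ z : ℝ, Real.tanh (s + Real.sqrt s * z) * gφ z := rfl

lemma integrable_tanh_gφ (c d : ℝ) :
    Integrable (fun z : ℝ => Real.tanh (c + d * z) * gφ z) := by
  apply integrable_bdd_gφ (C := 1)
    ((continuous_tanh.comp (by fun_prop)).mul continuous_gφ)
  intro z
  show |Real.tanh (c + d*z) * gφ z| ≤ 1 * gφ z
  rw [abs_mul, abs_of_nonneg (gφ_nonneg z), one_mul]
  calc |Real.tanh (c + d*z)| * gφ z ≤ 1 * gφ z :=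
      mul_le_mul_of_nonneg_right (abs_tanh_le _) (gφ_nonneg z)
    _ = gφ z := one_mul _

/-- **The BPSK MMSE is nonincreasing on `[0,∞)`.** -/
theorem mmse_antitone (s t : ℝ) (hs : 0 ≤ s) (hst : s ≤ t) : mmse t ≤ mmse s := by
  rcases eq_or_lt_of_le hst with rfl | hlt
  · exact le_refl _
  rw [mmse_eq, mmse_eq]
  apply sub_le_sub_left
  rcases eq_or_lt_of_le hs with rfl | hspos
  · -- s = 0
    have hF0 : (∫ z : ℝ, Real.tanh (0 + Real.sqrt 0 * z) * gφ z) = 0 := by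
      simp [Real.sqrt_zero, Real.tanh_zero]
    rw [hF0]
    have hstep := step_c (u := t) hlt 0
    rw [Real.tanh_zero] at hstep
    calc (0:ℝ) ≤ ∫ w : ℝ, Real.tanh (0 + t + Real.sqrt t * w) * gφ w := hstep
      _ = ∫ z : ℝ, Real.tanh (t + Real.sqrt t * z) * gφ z := by
          apply integral_congr_ae; filter_upwards with w; rw [zero_add]
  · -- 0 < s
    set u := t - s with hudef
    have hu : 0 < u := by simp [hudef]; linarith
    have ht : t = s + u := by rw [hudef]; ring
    rw [ht]
    rw [conv_repr hspos hu]
    -- pointwise comparison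
    have hpt : ∀ z : ℝ, Real.tanh (s + Real.sqrt s * z) * gφ z
        ≤ (∫ w : ℝ, Real.tanh ((s+u) + Real.sqrt s * z + Real.sqrt u * w) * gφ w) * gφ z := by
      intro z
      apply mul_le_mul_of_nonneg_right _ (gφ_nonneg z)
      have hstep := step_c hu (s + Real.sqrt s * z)
      calc Real.tanh (s + Real.sqrt s * z)
          ≤ ∫ w : ℝ, Real.tanh (s + Real.sqrt s * z + u + Real.sqrt u * w) * gφ w := hstep
        _ = ∫ w : ℝ, Real.tanh ((s+u) + Real.sqrt s * z + Real.sqrt u * w) * gφ w := by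
            apply integral_congr_ae; filter_upwards with w
            rw [show s + Real.sqrt s * z + u + Real.sqrt u * w
              = (s+u) + Real.sqrt s * z + Real.sqrt u * w by ring]
    -- integrability of the RHS integrand
    have hRHSint : Integrable (fun z : ℝ =>
        (∫ w : ℝ, Real.tanh ((s+u) + Real.sqrt s * z + Real.sqrt u * w) * gφ w) * gφ z) := by
      have hGcont : Continuous (Function.uncurry fun z w : ℝ =>
          Real.tanh ((s+u) + Real.sqrt s * z + Real.sqrt u * w) * gφ w) :=
        (continuous_tanh.comp (by fun_prop)).mul (continuous_gφ.comp continuous_snd)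
      have hSM : StronglyMeasurable fun z : ℝ =>
          ∫ w : ℝ, Real.tanh ((s+u) + Real.sqrt s * z + Real.sqrt u * w) * gφ w :=
        hGcont.stronglyMeasurable.integral_prod_right'
      refine integrable_gφ.mono' (hSM.mul continuous_gφ.stronglyMeasurable).aestronglyMeasurable ?_
      filter_upwards with z
      have hbd : |∫ w : ℝ, Real.tanh ((s+u) + Real.sqrt s * z + Real.sqrt u * w) * gφ w| ≤ 1 := by
        have h1 : |∫ w : ℝ, Real.tanh ((s+u) + Real.sqrt s * z + Real.sqrt u * w) * gφ w|
            ≤ ∫ w : ℝ, |Real.tanh ((s+u) + Real.sqrt s * z + Real.sqrt u * w)| * |gφ w| := by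
          simpa [Real.norm_eq_abs, abs_mul] using
            norm_integral_le_integral_norm (μ := volume)
              (fun w : ℝ => Real.tanh ((s+u) + Real.sqrt s * z + Real.sqrt u * w) * gφ w)
        have h2 : (∫ w : ℝ, |Real.tanh ((s+u) + Real.sqrt s * z + Real.sqrt u * w)| * |gφ w|)
            ≤ ∫ w : ℝ, gφ w := by
          have habs : Integrable (fun w : ℝ =>
              |Real.tanh ((s+u) + Real.sqrt s * z + Real.sqrt u * w)| * |gφ w|) := by
            have := (integrable_tanh_gφ ((s+u) + Real.sqrt s * z) (Real.sqrt u)).abs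
            simpa [abs_mul] using this
          apply integral_mono habs integrable_gφ
          intro w
          dsimp only
          rw [abs_of_nonneg (gφ_nonneg w)]
          calc |Real.tanh ((s+u) + Real.sqrt s * z + Real.sqrt u * w)| * gφ w
              ≤ 1 * gφ w := mul_le_mul_of_nonneg_right (abs_tanh_le _) (gφ_nonneg w)
            _ = gφ w := one_mul _
        calc |∫ w : ℝ, Real.tanh ((s+u) + Real.sqrt s * z + Real.sqrt u * w) * gφ w|
            ≤ ∫ w : ℝ, gφ w := h1.trans h2
          _ = 1 := integral_gφ
      rw [Real.norm_eq_abs, abs_mul, abs_of_nonneg (gφ_nonneg z)]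
      calc |∫ w : ℝ, Real.tanh ((s+u) + Real.sqrt s * z + Real.sqrt u * w) * gφ w| * gφ z
          ≤ 1 * gφ z := mul_le_mul_of_nonneg_right hbd (gφ_nonneg z)
        _ = gφ z := one_mul _
    exact integral_mono (integrable_tanh_gφ s (Real.sqrt s)) hRHSint hpt
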